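/- Let h : R^n -> R be a convex function with \int e^{h(x) - (\beta/2)|x|^2} d\gamma_n(x) = 1 for some \beta \ge 0. Then its Legendre transform h^*(t) := \sup_x (\langle t,x \rangle - h(x)) satisfies h^*(t) \ge -(n/2)\ln(1+\beta) + |t|^2/(2(1+\beta)) for all t in R^n. -/

import Mathlib

open MeasureTheory Real Set

noncomputable def stdGaussian (n : ℕ) : Measure (EuclideanSpace ℝ (Fin n)) :=
  volume.withDensity (fun x => ENNReal.ofReal ((2 * π) ^ (-(n : ℝ) / 2) * Real.exp (-‖x‖ ^ 2 / 2)))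

noncomputable def Phibar (s : ℝ) : ℝ :=
  (Real.sqrt (2 * π))⁻¹ * ∫ x in Set.Ioi s, Real.exp (-x ^ 2 / 2)


theorem legendre_lower_bound (n : ℕ) (h : EuclideanSpace ℝ (Fin n) → ℝ) (β : ℝ)
    (hβ : 0 ≤ β)
    (hconv : ConvexOn ℝ Set.univ h)
    (hint : ∫ x, Real.exp (h x - β / 2 * ‖x‖ ^ 2) ∂(stdGaussian n) = 1) :
    ∀ t : EuclideanSpace ℝ (Fin n),
      ((↑((-(n : ℝ) / 2) * Real.log (1 + β) + ‖t‖ ^ 2 / (2 * (1 + β))) : ℝ) : EReal)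
        ≤ ⨆ x : EuclideanSpace ℝ (Fin n), ((inner ℝ t x - h x : ℝ) : EReal) := by
  intro t
  set c : ℝ := (-(n : ℝ) / 2) * Real.log (1 + β) + ‖t‖ ^ 2 / (2 * (1 + β)) with hc
  by_contra hcon
  push_neg at hcon
  set S : EReal := ⨆ x : EuclideanSpace ℝ (Fin n), ((inner ℝ t x - h x : ℝ) : EReal) with hS
  have h0 : ((inner ℝ t (0 : EuclideanSpace ℝ (Fin n)) - h 0 : ℝ) : EReal) ≤ S :=
    le_iSup (fun x : EuclideanSpace ℝ (Fin n) => ((inner ℝ t x - h x : ℝ) : EReal)) 0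
  have hSbot : S ≠ ⊥ := by
    intro hb
    rw [hb, le_bot_iff] at h0
    exact EReal.coe_ne_bot _ h0
  have hStop : S ≠ ⊤ := ne_top_of_lt hcon
  set s' : ℝ := S.toReal with hs'
  have hScoe : (s' : EReal) = S := EReal.coe_toReal hStop hSbot
  have hpt : ∀ x : EuclideanSpace ℝ (Fin n), (inner ℝ t x : ℝ) - h x ≤ s' := by
    intro x
    have : ((inner ℝ t x - h x : ℝ) : EReal) ≤ (s' : EReal) := by
      rw [hScoe]; exact le_iSup (fun x : EuclideanSpace ℝ (Fin n) => ((inner ℝ t x - h x : ℝ) : EReal)) x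
    exact EReal.coe_le_coe_iff.1 this
  have hs'c : s' < c := by
    have : (s' : EReal) < (c : EReal) := by rw [hScoe]; exact hcon
    exact EReal.coe_lt_coe_iff.1 this
  -- basic positivity facts
  have h1β : (0 : ℝ) < 1 + β := by linarith
  have hπ : (0 : ℝ) < 2 * π := by positivity
  set a : ℝ := (1 + β) / 2 with ha
  have hapos : (0 : ℝ) < a := by positivity
  -- continuity of h
  have hcont : Continuous h := by
    rw [← continuousOn_univ]
    exact hconv.continuousOn isOpen_univ
  -- density function
  set ρ : EuclideanSpace ℝ (Fin n) → ℝ :=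
    fun x => (2 * π) ^ (-(n : ℝ) / 2) * Real.exp (-‖x‖ ^ 2 / 2) with hρ
  have hρpos : ∀ x, 0 < ρ x := fun x => by positivity
  have hρcont : Continuous ρ := by
    apply Continuous.mul continuous_const
    exact Real.continuous_exp.comp (by continuity)
  -- rewrite the integral over the Gaussian measure
  set g : EuclideanSpace ℝ (Fin n) → ℝ := fun x => Real.exp (h x - β / 2 * ‖x‖ ^ 2) with hg
  have hρnn_meas : Measurable fun x => (ρ x).toNNReal :=
    (hρcont.measurable).real_toNNReal
  have hint1 : ∫ x, ρ x * g x = 1 := by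
    have : ∫ x, g x ∂(stdGaussian n) = ∫ x, ((ρ x).toNNReal : ℝ) • g x := by
      rw [stdGaussian]
      exact integral_withDensity_eq_integral_smul hρnn_meas g
    rw [hint] at this
    rw [this]
    apply integral_congr_ae
    filter_upwards with x
    rw [smul_eq_mul, Real.coe_toNNReal _ (hρpos x).le]
  set F : EuclideanSpace ℝ (Fin n) → ℝ := fun x => ρ x * g x with hF
  have hFint : Integrable F := by
    by_contra hni
    rw [hF] at hni
    rw [integral_undef hni] at hint1
    norm_num at hint1
  -- the lower bound function
  set L : EuclideanSpace ℝ (Fin n) → ℝ :=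
    fun x => ρ x * Real.exp ((inner ℝ t x : ℝ) - s' - β / 2 * ‖x‖ ^ 2) with hL
  have hLF : ∀ x, L x ≤ F x := by
    intro x
    apply mul_le_mul_of_nonneg_left _ (hρpos x).le
    apply Real.exp_le_exp.2
    have := hpt x
    linarith
  have hint2 : ∫ x, L x ≤ 1 := by
    rw [← hint1]
    apply integral_mono_of_nonneg
    · filter_upwards with x
      exact mul_nonneg (hρpos x).le (Real.exp_pos _).le
    · exact hFint
    · filter_upwards with x
      exact hLF x
  -- compute ∫ L
  set y : EuclideanSpace ℝ (Fin n) := (1 + β)⁻¹ • t with hy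
  set K : ℝ := (2 * π) ^ (-(n : ℝ) / 2) * Real.exp (-s' + ‖t‖ ^ 2 / (2 * (1 + β))) with hK
  have hLeq : ∀ x, L x = K * Real.exp (-a * ‖x - y‖ ^ 2) := by
    intro x
    show ((2 * π) ^ (-(n : ℝ) / 2) * Real.exp (-‖x‖ ^ 2 / 2))
        * Real.exp ((inner ℝ t x : ℝ) - s' - β / 2 * ‖x‖ ^ 2)
      = (2 * π) ^ (-(n : ℝ) / 2) * Real.exp (-s' + ‖t‖ ^ 2 / (2 * (1 + β)))
        * Real.exp (-a * ‖x - y‖ ^ 2)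
    rw [mul_assoc, ← Real.exp_add, mul_assoc, ← Real.exp_add]
    congr 2
    rw [norm_sub_sq_real]
    have hxy : (inner ℝ x y : ℝ) = (1 + β)⁻¹ * (inner ℝ t x : ℝ) := by
      rw [hy, real_inner_smul_right, real_inner_comm]
    have hny : ‖y‖ ^ 2 = ((1 + β)⁻¹) ^ 2 * ‖t‖ ^ 2 := by
      rw [hy, norm_smul, mul_pow, Real.norm_eq_abs, sq_abs]
    rw [hxy, hny, ha]
    field_simp
    ring
  have hIy : ∫ x : EuclideanSpace ℝ (Fin n), Real.exp (-a * ‖x - y‖ ^ 2)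
      = (π / a) ^ ((n : ℝ) / 2) := by
    rw [integral_sub_right_eq_self (μ := volume)
      (fun x : EuclideanSpace ℝ (Fin n) => Real.exp (-a * ‖x‖ ^ 2)) y]
    rw [GaussianFourier.integral_rexp_neg_mul_sq_norm hapos]
    congr 2
    simp [finrank_euclideanSpace]
  have hIL : ∫ x, L x = Real.exp (c - s') := by
    calc ∫ x, L x = ∫ x : EuclideanSpace ℝ (Fin n), K * Real.exp (-a * ‖x - y‖ ^ 2) := by
          congr 1; ext x; exact hLeq x
      _ = K * ((π / a) ^ ((n : ℝ) / 2)) := by rw [integral_const_mul, hIy]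
      _ = Real.exp (c - s') := by
          have h2 : π / a = 2 * π / (1 + β) := by rw [ha]; field_simp
          rw [hK, hc, h2, Real.div_rpow hπ.le h1β.le]
          have h4 : ((2 * π) ^ ((n : ℝ) / 2) : ℝ) ≠ 0 := by positivity
          have h5 : ((1 + β) ^ ((n : ℝ) / 2) : ℝ) ≠ 0 := by positivity
          have key : (2 * π) ^ (-(n : ℝ) / 2) * ((2 * π) ^ ((n : ℝ) / 2) / (1 + β) ^ ((n : ℝ) / 2))
              = Real.exp (-(n : ℝ) / 2 * Real.log (1 + β)) := by
            calc (2 * π) ^ (-(n : ℝ) / 2) * ((2 * π) ^ ((n : ℝ) / 2) / (1 + β) ^ ((n : ℝ) / 2))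
                = ((1 + β) ^ ((n : ℝ) / 2))⁻¹ := by
                  rw [neg_div, Real.rpow_neg hπ.le]
                  field_simp
              _ = Real.exp (-(n : ℝ) / 2 * Real.log (1 + β)) := by
                  rw [Real.rpow_def_of_pos h1β, ← Real.exp_neg]
                  congr 1
                  ring
          calc (2 * π) ^ (-(n : ℝ) / 2) * Real.exp (-s' + ‖t‖ ^ 2 / (2 * (1 + β)))
                * ((2 * π) ^ ((n : ℝ) / 2) / (1 + β) ^ ((n : ℝ) / 2))
              = ((2 * π) ^ (-(n : ℝ) / 2)
                  * ((2 * π) ^ ((n : ℝ) / 2) / (1 + β) ^ ((n : ℝ) / 2)))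
                * Real.exp (-s' + ‖t‖ ^ 2 / (2 * (1 + β))) := by ring
            _ = Real.exp (-(n : ℝ) / 2 * Real.log (1 + β))
                * Real.exp (-s' + ‖t‖ ^ 2 / (2 * (1 + β))) := by rw [key]
            _ = Real.exp (-(n : ℝ) / 2 * Real.log (1 + β) + ‖t‖ ^ 2 / (2 * (1 + β)) - s') := by
                rw [← Real.exp_add]; congr 1; ring
  rw [hIL] at hint2
  have : Real.exp 0 < Real.exp (c - s') := Real.exp_lt_exp.2 (by linarith)
  rw [Real.exp_zero] at this
  linarith
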